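/- The COMBO kernel k(x,x') = Π_{i=1}^n Σ_{j=1}^{g_i} e^{−β_i λ_j^i} f_j^i(x_i) f_j^i(x_i'), where (λ_j^i, f_j^i) are orthonormal Laplacian eigenpairs of the complete graph on X_i, equals Π_{i=1}^n [(1+(g_i−1)e^{−β_i g_i})/g_i]^{δ(x_i,x_i')} [(1−e^{−β_i g_i})/g_i]^{1−δ(x_i,x_i')}, and hence is proportional to the ARD heat kernel on the Hamming graph. -/

import Mathlib

lemma combo_factor {Y : Type*} [Fintype Y] [DecidableEq Y]
    (hg : 2 ≤ Fintype.card Y) (β : ℝ)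
    (L : Matrix Y Y ℝ)
    (hL : ∀ a b : Y, L a b = if a = b then (Fintype.card Y : ℝ) - 1 else -1)
    (f : Y → Y → ℝ) (lam : Y → ℝ)
    (horth : ∀ j j' : Y, ∑ v, f j v * f j' v = if j = j' then 1 else 0)
    (heig : ∀ j : Y, L.mulVec (f j) = lam j • f j)
    (a b : Y) :
    ∑ j, Real.exp (-β * lam j) * f j a * f j b =
      if a = b then
        (1 + ((Fintype.card Y : ℝ) - 1) * Real.exp (-β * (Fintype.card Y : ℝ)))
          / (Fintype.card Y : ℝ)
      else (1 - Real.exp (-β * (Fintype.card Y : ℝ))) / (Fintype.card Y : ℝ) := by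
  set G : ℝ := (Fintype.card Y : ℝ) with hGdef
  have hG2 : (2:ℝ) ≤ G := by rw [hGdef]; exact_mod_cast hg
  have hGpos : (0:ℝ) < G := by linarith
  have hGne : G ≠ 0 := ne_of_gt hGpos
  -- eigen equation rewritten
  have hkey : ∀ (j c : Y), G * f j c - (∑ v, f j v) = lam j * f j c := by
    intro j c
    have h := congrFun (heig j) c
    simp only [Matrix.mulVec, dotProduct, Pi.smul_apply, smul_eq_mul] at h
    rw [← h]
    have hstep : ∀ v ∈ Finset.univ, L c v * f j v
        = G * (if c = v then f j v else 0) - f j v := by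
      intro v _
      rw [hL]
      split <;> ring
    rw [Finset.sum_congr rfl hstep, Finset.sum_sub_distrib, ← Finset.mul_sum,
      Finset.sum_ite_eq]
    simp
  have hnorm : ∀ j : Y, ∑ v, f j v * f j v = 1 := by
    intro j; simpa using horth j j
  -- eigenvalues are 0 or G
  have hspec : ∀ j : Y, lam j = 0 ∨ lam j = G := by
    intro j
    by_cases hj : lam j = G
    · right; exact hj
    · left
      have hne : G - lam j ≠ 0 := sub_ne_zero.mpr (Ne.symm hj)
      obtain ⟨a₀⟩ : Nonempty Y := Fintype.card_pos_iff.mp (by omega)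
      have hconst : ∀ c, f j c = f j a₀ := by
        intro c
        have h0 : (G - lam j) * (f j c - f j a₀) = 0 := by
          linear_combination (hkey j c) - (hkey j a₀)
        have := (mul_eq_zero.mp h0).resolve_left hne
        linarith [sub_eq_zero.mp this]
      have hsum : ∑ v, f j v = G * f j a₀ := by
        rw [Finset.sum_congr rfl (fun v _ => hconst v)]
        simp [Finset.sum_const, nsmul_eq_mul, hGdef]
      have h0 := hkey j a₀
      rw [hsum] at h0
      have hfa : f j a₀ ≠ 0 := by
        intro h
        have hn := hnorm j
        rw [Finset.sum_congr rfl (fun v _ => by rw [hconst v, h])] at hn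
        simp at hn
      have hlz : lam j * f j a₀ = 0 := by linarith
      exact (mul_eq_zero.mp hlz).resolve_right hfa
  -- column orthonormality
  have hcol : ∀ c d : Y, ∑ j, f j c * f j d = if c = d then 1 else 0 := by
    set F : Matrix Y Y ℝ := Matrix.of f with hF
    have hFFt : F * F.transpose = 1 := by
      ext j j'
      simpa [Matrix.mul_apply, Matrix.transpose_apply, Matrix.one_apply, hF] using horth j j'
    have hFtF : F.transpose * F = 1 := mul_eq_one_comm.mp hFFt
    intro c d
    have := congrFun (congrFun hFtF c) d
    simpa [Matrix.mul_apply, Matrix.transpose_apply, Matrix.one_apply, hF] using this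
  -- spectral decomposition of L
  have hLspec : ∀ c d : Y, ∑ j, lam j * (f j c * f j d) = L c d := by
    intro c d
    have step1 : ∑ j, lam j * (f j c * f j d)
        = ∑ j, (∑ v, L c v * f j v) * f j d := by
      apply Finset.sum_congr rfl
      intro j _
      have h := congrFun (heig j) c
      simp only [Matrix.mulVec, dotProduct, Pi.smul_apply, smul_eq_mul] at h
      rw [h]; ring
    rw [step1]
    have step2 : ∑ j, (∑ v, L c v * f j v) * f j d
        = ∑ v, L c v * ∑ j, f j v * f j d := by
      simp only [Finset.sum_mul, Finset.mul_sum]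
      rw [Finset.sum_comm]
      simp only [mul_assoc]
    rw [step2, Finset.sum_congr rfl (fun v _ => by rw [hcol v d])]
    simp
  -- linear interpolation of the exponential on {0, G}
  have hexp : ∀ j : Y, Real.exp (-β * lam j)
      = 1 + (Real.exp (-β * G) - 1) / G * lam j := by
    intro j
    rcases hspec j with h | h
    · simp [h]
    · rw [h]; field_simp; ring
  have main : ∑ j, Real.exp (-β * lam j) * f j a * f j b
      = (∑ j, f j a * f j b)
        + (Real.exp (-β * G) - 1) / G * ∑ j, lam j * (f j a * f j b) := by
    rw [Finset.mul_sum, ← Finset.sum_add_distrib]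
    apply Finset.sum_congr rfl
    intro j _
    rw [hexp j]; ring
  rw [main, hcol a b, hLspec a b, hL a b]
  split_ifs with h
  · field_simp; try ring
  · field_simp; try ring

/-- the COMBO kernel (product over factors of heat kernels on complete graphs,
built from orthonormal Laplacian eigenpairs) has the stated closed form, and hence is
proportional to the ARD heat kernel on the Hamming graph. -/
theorem stmt_4 (n : ℕ) (X : Fin n → Type*) [∀ i, Fintype (X i)] [∀ i, DecidableEq (X i)]
    (hg : ∀ i, 2 ≤ Fintype.card (X i))
    (β : Fin n → ℝ) (hβ : ∀ i, 0 < β i)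
    (L : ∀ i, Matrix (X i) (X i) ℝ)
    (hL : ∀ i (a b : X i), L i a b = if a = b then (Fintype.card (X i) : ℝ) - 1 else -1)
    (f : ∀ i, X i → X i → ℝ) (lam : ∀ i, X i → ℝ)
    (horth : ∀ i (j j' : X i), ∑ v, f i j v * f i j' v = if j = j' then 1 else 0)
    (heig : ∀ i (j : X i), (L i).mulVec (f i j) = lam i j • f i j) :
    (∀ x x' : ∀ i, X i,
      ∏ i, (∑ j, Real.exp (-(β i) * lam i j) * f i j (x i) * f i j (x' i)) =
        ∏ i, (if x i = x' i then
            (1 + ((Fintype.card (X i) : ℝ) - 1) * Real.exp (-(β i) * (Fintype.card (X i) : ℝ)))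
              / (Fintype.card (X i) : ℝ)
          else (1 - Real.exp (-(β i) * (Fintype.card (X i) : ℝ))) / (Fintype.card (X i) : ℝ))) ∧
    (∃ C : ℝ, 0 < C ∧ ∀ x x' : ∀ i, X i,
      ∏ i, (∑ j, Real.exp (-(β i) * lam i j) * f i j (x i) * f i j (x' i)) =
        C * ∏ i, (if x i = x' i then 1 else
          (1 - Real.exp (-(β i) * (Fintype.card (X i) : ℝ))) /
            (1 + ((Fintype.card (X i) : ℝ) - 1) * Real.exp (-(β i) * (Fintype.card (X i) : ℝ))))) := by
  have hfac : ∀ (i : Fin n) (a b : X i),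
      ∑ j, Real.exp (-(β i) * lam i j) * f i j a * f i j b =
        if a = b then
          (1 + ((Fintype.card (X i) : ℝ) - 1) * Real.exp (-(β i) * (Fintype.card (X i) : ℝ)))
            / (Fintype.card (X i) : ℝ)
        else (1 - Real.exp (-(β i) * (Fintype.card (X i) : ℝ))) / (Fintype.card (X i) : ℝ) :=
    fun i => combo_factor (hg i) (β i) (L i) (hL i) (f i) (lam i) (horth i) (heig i)
  have hclosed : ∀ x x' : ∀ i, X i,
      ∏ i, (∑ j, Real.exp (-(β i) * lam i j) * f i j (x i) * f i j (x' i)) =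
        ∏ i, (if x i = x' i then
            (1 + ((Fintype.card (X i) : ℝ) - 1) * Real.exp (-(β i) * (Fintype.card (X i) : ℝ)))
              / (Fintype.card (X i) : ℝ)
          else (1 - Real.exp (-(β i) * (Fintype.card (X i) : ℝ))) / (Fintype.card (X i) : ℝ)) :=
    fun x x' => Finset.prod_congr rfl (fun i _ => hfac i (x i) (x' i))
  refine ⟨hclosed, ⟨∏ i, (1 + ((Fintype.card (X i) : ℝ) - 1) *
      Real.exp (-(β i) * (Fintype.card (X i) : ℝ))) / (Fintype.card (X i) : ℝ), ?_, ?_⟩⟩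
  · apply Finset.prod_pos
    intro i _
    have hG : (2:ℝ) ≤ (Fintype.card (X i) : ℝ) := by exact_mod_cast hg i
    have hE := Real.exp_pos (-(β i) * (Fintype.card (X i) : ℝ))
    apply div_pos
    · nlinarith
    · linarith
  · intro x x'
    rw [hclosed x x', ← Finset.prod_mul_distrib]
    apply Finset.prod_congr rfl
    intro i _
    have hG : (2:ℝ) ≤ (Fintype.card (X i) : ℝ) := by exact_mod_cast hg i
    have hE := Real.exp_pos (-(β i) * (Fintype.card (X i) : ℝ))
    have hden : (0:ℝ) < 1 + ((Fintype.card (X i) : ℝ) - 1) *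
        Real.exp (-(β i) * (Fintype.card (X i) : ℝ)) := by nlinarith
    split_ifs with h
    · rw [mul_one]
    · rw [div_mul_div_comm, div_eq_div_iff (by positivity)
        (by positivity : ((Fintype.card (X i):ℝ) * (1 + ((Fintype.card (X i) : ℝ) - 1) *
          Real.exp (-(β i) * (Fintype.card (X i) : ℝ)))) ≠ 0)]
      ring
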